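/- arXiv:2602.23256 — 10 statements merged into one kernel-verified Lean document; each statement's English description precedes it below -/
import Mathlib

section
/- Let G be a linearly ordered abelian group, H a convex subgroup, k a nonzero integer, and n ≥ 2 an integer. Then for a ∈ G: a ∈ H + nG if and only if k•a ∈ H + (k·n)G. -/
/-- A convex subgroup of a linearly ordered abelian group. -/
def IsConvexSubgroup {G : Type*} [AddCommGroup G] [LinearOrder G] [IsOrderedAddMonoid G] (H : AddSubgroup G) : Prop :=
  ∀ ⦃x y : G⦄, 0 ≤ x → x ≤ y → y ∈ H → x ∈ H

/-- Membership in the set `H + nG` for an integer `n`. -/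
def memHnZ {G : Type*} [AddCommGroup G] (H : AddSubgroup G) (n : ℤ) (a : G) : Prop :=
  ∃ h ∈ H, ∃ x : G, a = h + n • x

lemma aux_mem {G : Type*} [AddCommGroup G] [LinearOrder G] [IsOrderedAddMonoid G] {H : AddSubgroup G}
    (hH : IsConvexSubgroup H) {k : ℤ} (hk : k ≠ 0) {g : G} (hg : k • g ∈ H) : g ∈ H := by
  have h1 : |k • g| ∈ H := by
    rcases abs_choice (k • g) with h | h
    · rw [h]; exact hg
    · rw [h]; exact H.neg_mem hg
  have h2 : |g| ≤ |k • g| := by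
    rw [abs_zsmul]
    calc |g| = (1 : ℤ) • |g| := (one_zsmul _).symm
    _ ≤ |k| • |g| := smul_le_smul_of_nonneg_right (Int.one_le_abs hk) (abs_nonneg g)
  have h3 : |g| ∈ H := hH (abs_nonneg g) h2 h1
  rcases abs_choice g with h | h
  · rw [← h]; exact h3
  · have := H.neg_mem h3; rw [h] at this; rwa [neg_neg] at this
  
theorem stmt5 {G : Type*} [AddCommGroup G] [LinearOrder G] [IsOrderedAddMonoid G] (H : AddSubgroup G)
    (hH : IsConvexSubgroup H) (k : ℤ) (hk : k ≠ 0) (n : ℤ) (hn : 2 ≤ n) (a : G) :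
    memHnZ H n a ↔ memHnZ H (k * n) (k • a) := by
  constructor
  · rintro ⟨h, hh, x, rfl⟩
    exact ⟨k • h, H.zsmul_mem hh k, x, by rw [smul_add, mul_zsmul]⟩
  · rintro ⟨h, hh, x, hx⟩
    have : k • (a - n • x) = h := by
      rw [smul_sub, hx, mul_zsmul]; abel
    have hm : a - n • x ∈ H := aux_mem hH hk (this ▸ hh)
    exact ⟨a - n • x, hm, x, by abel⟩
end

section
/- Let G be a linearly ordered abelian group, n ≥ 2, and a, b ∈ G. Then 𝔰ₙ(a + b) ≤ max{𝔰ₙ(a), 𝔰ₙ(b)}, where 𝔰ₙ(x) is the largest convex subgroup H of G with x ∉ H + nG (and ∅, the formal least element, if x ∈ nG), and convex subgroups are ordered by inclusion. -/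
/-- The type of convex subgroups, ordered by inclusion. -/
abbrev ConvexSubgroup (G : Type*) [AddCommGroup G] [LinearOrder G] [IsOrderedAddMonoid G] :=
  {H : AddSubgroup G // IsConvexSubgroup H}

/-- Membership in the set `H + nG`. -/
def memHn {G : Type*} [AddCommGroup G] (H : AddSubgroup G) (n : ℕ) (a : G) : Prop :=
  ∃ h ∈ H, ∃ x : G, a = h + n • x

/-- `IsS n a s` says that `s` (an element of the convex subgroups with a formal least
element `⊥` adjoined) is the value `𝔰ₙ(a)`: it is `⊥` if `a ∈ nG`, and otherwise it is
the largest convex subgroup `H` with `a ∉ H + nG`. -/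
def IsS {G : Type*} [AddCommGroup G] [LinearOrder G] [IsOrderedAddMonoid G] (n : ℕ) (a : G)
    (s : WithBot (ConvexSubgroup G)) : Prop :=
  ((∃ x : G, a = n • x) ∧ s = ⊥) ∨
  (¬ (∃ x : G, a = n • x) ∧ ∃ H : ConvexSubgroup G, s = ↑H ∧ ¬ memHn H.1 n a ∧
      ∀ H' : ConvexSubgroup G, ¬ memHn H'.1 n a → H' ≤ H)


private lemma memHn_of_ns {G : Type*} [AddCommGroup G] [LinearOrder G] [IsOrderedAddMonoid G] (H : ConvexSubgroup G)
    (n : ℕ) (c : G) (h : ∃ x : G, c = n • x) : memHn H.1 n c := by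
  obtain ⟨x, rfl⟩ := h
  exact ⟨0, H.1.zero_mem, x, by simp⟩

private lemma key {G : Type*} [AddCommGroup G] [LinearOrder G] [IsOrderedAddMonoid G] (H : ConvexSubgroup G)
    (n : ℕ) (c : G) (s : WithBot (ConvexSubgroup G)) (hmem : ¬ memHn H.1 n c)
    (hs : IsS n c s) : (↑H : WithBot (ConvexSubgroup G)) ≤ s := by
  rcases hs with ⟨h1, _⟩ | ⟨_, Hc, rfl, _, hmax⟩
  · exact absurd (memHn_of_ns H n c h1) hmem
  · exact WithBot.coe_le_coe.2 (hmax H hmem)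

/-- `𝔰ₙ(a + b) ≤ max {𝔰ₙ(a), 𝔰ₙ(b)}` (the convex subgroups being linearly ordered,
being at most the max means being `≤` one of the two). -/
theorem stmt7 {G : Type*} [AddCommGroup G] [LinearOrder G] [IsOrderedAddMonoid G] (n : ℕ) (hn : 2 ≤ n) (a b : G)
    (sa sb sab : WithBot (ConvexSubgroup G))
    (ha : IsS n a sa) (hb : IsS n b sb) (hab : IsS n (a + b) sab) :
    sab ≤ sa ∨ sab ≤ sb := by
  rcases hab with ⟨_, rfl⟩ | ⟨_, H, rfl, hmem, _⟩
  · exact Or.inl bot_le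
  have : ¬ memHn H.1 n a ∨ ¬ memHn H.1 n b := by
    by_contra h
    push_neg at h
    obtain ⟨⟨h1, h1m, x1, rfl⟩, ⟨h2, h2m, x2, rfl⟩⟩ := h
    exact hmem ⟨h1 + h2, H.1.add_mem h1m h2m, x1 + x2, by rw [smul_add]; abel⟩
  rcases this with h | h
  · exact Or.inl (key H n a sa h ha)
  · exact Or.inr (key H n b sb h hb)
end

section
/- Let G be a linearly ordered abelian group, m, n ≥ 2 integers, and a ∈ G. Then 𝔰ₙ(a) = 𝔰_{mn}(m•a). -/
/-- In a linearly ordered abelian group, `m • b = 0` with `m ≠ 0` forces `b = 0`. -/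
lemma nsmul_eq_zero_iff' {G : Type*} [AddCommGroup G] [LinearOrder G] [IsOrderedAddMonoid G] {m : ℕ} (hm : m ≠ 0)
    {b : G} (h : m • b = 0) : b = 0 := by
  rcases lt_trichotomy b 0 with hb | hb | hb
  · exact absurd h (by have := nsmul_neg hb hm; exact ne_of_lt this)
  · exact hb
  · exact absurd h (by have := nsmul_pos hb hm; exact (ne_of_gt this))

/-- Convex subgroups are closed under division: `m • b ∈ H → b ∈ H`. -/
lemma convex_div {G : Type*} [AddCommGroup G] [LinearOrder G] [IsOrderedAddMonoid G] (H : ConvexSubgroup G)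
    {m : ℕ} (hm : m ≠ 0) {b : G} (h : m • b ∈ H.1) : b ∈ H.1 := by
  rcases le_total 0 b with hb | hb
  · refine H.2 hb ?_ h
    calc b = 1 • b := (one_nsmul b).symm
    _ ≤ m • b := nsmul_le_nsmul_left hb (Nat.one_le_iff_ne_zero.mpr hm)
  · have hnb : 0 ≤ -b := neg_nonneg.mpr hb
    have : -b ∈ H.1 := by
      refine H.2 hnb ?_ (AddSubgroup.neg_mem _ h)
      calc -b = 1 • (-b) := (one_nsmul _).symm
      _ ≤ m • (-b) := nsmul_le_nsmul_left hnb (Nat.one_le_iff_ne_zero.mpr hm)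
      _ = -(m • b) := by rw [smul_neg]
    simpa using AddSubgroup.neg_mem _ this

lemma ex_iff {G : Type*} [AddCommGroup G] [LinearOrder G] [IsOrderedAddMonoid G] {m n : ℕ} (hm : m ≠ 0)
    (a : G) : (∃ x : G, a = n • x) ↔ (∃ x : G, m • a = (m * n) • x) := by
  constructor
  · rintro ⟨x, rfl⟩; exact ⟨x, by rw [mul_nsmul']⟩
  · rintro ⟨x, hx⟩
    refine ⟨x, ?_⟩
    have h0 : m • (a - n • x) = 0 := by rw [smul_sub, ← mul_nsmul', ← hx, sub_self]
    exact sub_eq_zero.mp (nsmul_eq_zero_iff' hm h0)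

lemma memHn_iff {G : Type*} [AddCommGroup G] [LinearOrder G] [IsOrderedAddMonoid G] {m n : ℕ} (hm : m ≠ 0)
    (H : ConvexSubgroup G) (a : G) : memHn H.1 n a ↔ memHn H.1 (m * n) (m • a) := by
  constructor
  · rintro ⟨h, hh, x, rfl⟩
    exact ⟨m • h, AddSubgroup.nsmul_mem _ hh m, x, by rw [smul_add, ← mul_nsmul']⟩
  · rintro ⟨h, hh, x, hx⟩
    have hmem : m • (a - n • x) ∈ H.1 := by
      have heq : m • (a - n • x) = h := by rw [smul_sub, ← mul_nsmul', hx]; abel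
      rw [heq]; exact hh
    exact ⟨a - n • x, convex_div H hm hmem, x, by abel⟩

theorem stmt10 {G : Type*} [AddCommGroup G] [LinearOrder G] [IsOrderedAddMonoid G] (m n : ℕ) (hm : 2 ≤ m) (hn : 2 ≤ n)
    (a : G) (u v : WithBot (ConvexSubgroup G))
    (hu : IsS n a u) (hv : IsS (m * n) (m • a) v) :
    u = v := by
  have hm0 : m ≠ 0 := by omega
  rcases hu with ⟨hex, rfl⟩ | ⟨hnex, H, rfl, hH, hmax⟩
  · rcases hv with ⟨_, rfl⟩ | ⟨hnex', _⟩
    · rfl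
    · exact absurd ((ex_iff hm0 a).mp hex) hnex'
  · rcases hv with ⟨hex', rfl⟩ | ⟨hnex', H', rfl, hH', hmax'⟩
    · exact absurd ((ex_iff hm0 a).mpr hex') hnex
    · have h1 : H ≤ H' := hmax' H (fun h => hH ((memHn_iff hm0 H a).mpr h))
      have h2 : H' ≤ H := hmax H' (fun h => hH' ((memHn_iff hm0 H' a).mp h))
      exact congrArg _ (le_antisymm h1 h2)
end

section
/- Let G be a linearly ordered abelian group, m, n ≥ 2 coprime integers, and a ∈ G. Then 𝔰ₙ(m•a) = 𝔰ₙ(a). -/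
lemma memHn_smul_iff {G : Type*} [AddCommGroup G] {m n : ℕ} (hcop : Nat.Coprime m n)
    (H : AddSubgroup G) (a : G) : memHn H n (m • a) ↔ memHn H n a := by
  obtain ⟨p, q, hpq⟩ : IsCoprime (m : ℤ) (n : ℤ) := by
    rw [Int.isCoprime_iff_gcd_eq_one]; exact_mod_cast hcop
  constructor
  · rintro ⟨h, hh, x, hx⟩
    refine ⟨p • h, H.zsmul_mem hh p, p • x + q • a, ?_⟩
    have : a = (p * m + q * n) • a := by rw [hpq, one_zsmul]
    calc a = (p * m + q * n) • a := this
    _ = p • ((m : ℤ) • a) + (q * n) • a := by rw [add_zsmul, mul_zsmul]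
    _ = p • (m • a) + n • (q • a) := by
        rw [natCast_zsmul, mul_comm, mul_zsmul, natCast_zsmul]
    _ = p • (h + n • x) + n • (q • a) := by rw [hx]
    _ = p • h + n • (p • x + q • a) := by
        rw [smul_add, smul_add, smul_comm p n x]; abel
  · rintro ⟨h, hh, x, hx⟩
    exact ⟨m • h, H.nsmul_mem hh m, m • x, by rw [hx, smul_add, smul_comm m n x]⟩

lemma smul_div_iff {G : Type*} [AddCommGroup G] {m n : ℕ} (hcop : Nat.Coprime m n)
    (a : G) : (∃ x : G, m • a = n • x) ↔ ∃ x : G, a = n • x := by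
  have := memHn_smul_iff (G := G) hcop ⊥ a
  simpa [memHn] using this

theorem stmt11 {G : Type*} [AddCommGroup G] [LinearOrder G] [IsOrderedAddMonoid G] (m n : ℕ) (hm : 2 ≤ m) (hn : 2 ≤ n)
    (hcop : Nat.Coprime m n) (a : G) (u v : WithBot (ConvexSubgroup G))
    (hu : IsS n (m • a) u) (hv : IsS n a v) :
    u = v := by
  rcases hu with ⟨⟨x, hx⟩, hu⟩ | ⟨hnu, Hu, hu, hmu, hmax_u⟩ <;>
    rcases hv with ⟨⟨y, hy⟩, hv⟩ | ⟨hnv, Hv, hv, hmv, hmax_v⟩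
  · rw [hu, hv]
  · exact absurd ((smul_div_iff hcop a).mp ⟨x, hx⟩) hnv
  · exact absurd (by rw [hy, smul_comm]; exact ⟨m • y, rfl⟩) hnu
  · rw [hu, hv]
    have h1 : Hu ≤ Hv := hmax_v Hu (fun h => hmu ((memHn_smul_iff hcop Hu.1 a).mpr h))
    have h2 : Hv ≤ Hu := hmax_u Hv (fun h => hmv ((memHn_smul_iff hcop Hv.1 a).mp h))
    exact congrArg _ (le_antisymm h1 h2)
end

section
/- Let G be a linearly ordered abelian group, p a prime, r ≥ 1, and a ∈ G. Then there exists a' ∈ G such that 𝔰ₚ(a') = 𝔰_{p^r}(a). -/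
lemma mem_of_abs_mem {G : Type*} [AddCommGroup G] [LinearOrder G] [IsOrderedAddMonoid G] {H : AddSubgroup G} {x : G}
    (h : |x| ∈ H) : x ∈ H := by
  rcases abs_choice x with h1 | h1
  · rwa [h1] at h
  · rw [h1] at h; simpa using H.neg_mem h

lemma abs_mem_of_mem {G : Type*} [AddCommGroup G] [LinearOrder G] [IsOrderedAddMonoid G] {H : AddSubgroup G} {x : G}
    (h : x ∈ H) : |x| ∈ H := by
  rcases abs_choice x with h1 | h1
  · rwa [h1]
  · rw [h1]; exact H.neg_mem h

/-- Convex subgroups form a chain. -/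
lemma convex_chain {G : Type*} [AddCommGroup G] [LinearOrder G] [IsOrderedAddMonoid G] {H H' : AddSubgroup G}
    (hH : IsConvexSubgroup H) (hH' : IsConvexSubgroup H') : H ≤ H' ∨ H' ≤ H := by
  by_contra hc
  push_neg at hc
  obtain ⟨h1, h2⟩ := hc
  obtain ⟨x, hx, hx'⟩ := SetLike.not_le_iff_exists.mp h1
  obtain ⟨y, hy, hy'⟩ := SetLike.not_le_iff_exists.mp h2
  rcases le_total |x| |y| with h | h
  · exact hx' (mem_of_abs_mem (hH' (abs_nonneg x) h (abs_mem_of_mem hy)))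
  · exact hy' (mem_of_abs_mem (hH (abs_nonneg y) h (abs_mem_of_mem hx)))

lemma convex_nsmul_mem {G : Type*} [AddCommGroup G] [LinearOrder G] [IsOrderedAddMonoid G] {H : AddSubgroup G}
    (hH : IsConvexSubgroup H) {n : ℕ} (hn : 0 < n) {z : G} (h : n • z ∈ H) : z ∈ H := by
  apply mem_of_abs_mem
  have h1 : |z| ≤ n • |z| := by
    calc |z| = 1 • |z| := (one_nsmul _).symm
    _ ≤ n • |z| := nsmul_le_nsmul_left (abs_nonneg z) hn
  have h2 : n • |z| = |n • z| := (abs_nsmul n z).symm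
  exact hH (abs_nonneg z) h1 (h2 ▸ abs_mem_of_mem h)

theorem stmt12 {G : Type*} [AddCommGroup G] [LinearOrder G] [IsOrderedAddMonoid G] (p r : ℕ) (hp : p.Prime) (hr : 1 ≤ r)
    (a : G) (v : WithBot (ConvexSubgroup G)) (hv : IsS (p ^ r) a v) :
    ∃ a' : G, IsS p a' v := by
  classical
  rcases hv with ⟨⟨x, hx⟩, hvbot⟩ | ⟨hnotdiv, H, hvH, hHa, hHmax⟩
  · exact ⟨0, Or.inl ⟨⟨0, by simp⟩, hvbot⟩⟩
  · have hP : ∃ j, ¬ memHn H.1 (p ^ j) a := ⟨r, hHa⟩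
    set m := Nat.find hP with hm
    have hm0 : m ≠ 0 := by
      intro h0
      have := Nat.find_spec hP
      rw [← hm, h0] at this
      exact this ⟨0, H.1.zero_mem, a, by simp⟩
    obtain ⟨i, hi⟩ : ∃ i, m = i + 1 := ⟨m - 1, (Nat.succ_pred_eq_of_ne_zero hm0).symm⟩
    have hmem : memHn H.1 (p ^ i) a := by
      have := Nat.find_min hP (m := i) (by omega)
      exact not_not.mp this
    have hnot : ¬ memHn H.1 (p ^ (i + 1)) a := by
      have := Nat.find_spec hP
      rwa [← hm, hi] at this
    have hir : i < r := by
      have : m ≤ r := Nat.find_min' hP hHa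
      omega
    obtain ⟨h, hh, x, hax⟩ := hmem
    have hppos : 0 < p := hp.pos
    refine ⟨x, Or.inr ⟨?_, H, hvH, ?_, ?_⟩⟩
    · rintro ⟨y, hy⟩
      exact hnot ⟨h, hh, y, by rw [hax, hy, smul_smul, ← pow_succ]⟩
    · rintro ⟨h', hh', y, hxy⟩
      refine hnot ⟨h + p ^ i • h', H.1.add_mem hh (H.1.nsmul_mem hh' _), y, ?_⟩
      rw [hax, hxy, smul_add, smul_smul, ← pow_succ, add_assoc]
    · intro H' hH'
      by_contra hc
      have hle : H.1 ≤ H'.1 := by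
        rcases convex_chain H.2 H'.2 with h1 | h1
        · exact h1
        · exact absurd h1 hc
      have haH' : memHn H'.1 (p ^ r) a := by
        by_contra hca
        exact hc (hHmax H' hca)
      obtain ⟨h'', hh'', y, hay⟩ := haH'
      have hz : x - p ^ (r - i) • y ∈ H'.1 := by
        apply convex_nsmul_mem H'.2 (pow_pos hppos i)
        have : p ^ i • (x - p ^ (r - i) • y) = h'' - h := by
          rw [smul_sub, smul_smul, ← pow_add]
          have : i + (r - i) = r := by omega
          rw [this]
          have e1 : p ^ i • x = a - h := by rw [hax]; abel
          have e2 : p ^ r • y = a - h'' := by rw [hay]; abel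
          rw [e1, e2]; abel
        rw [this]
        exact H'.1.sub_mem hh'' (hle hh)
      apply hH'
      refine ⟨x - p ^ (r - i) • y, hz, p ^ (r - i - 1) • y, ?_⟩
      rw [smul_smul, ← pow_succ']
      have : p ^ (r - i - 1 + 1) = p ^ (r - i) := by congr 1; omega
      rw [this]
      abel
end

section
/- Let G be a linearly ordered abelian group, n ≥ 2, and a ∈ G. Then 𝔰ₙ(a) = max over primes p dividing n of 𝔰_{p^{v_p(n)}}(a), where v_p(n) is the p-adic valuation of n. -/
lemma memHn_of_dvd {G : Type*} [AddCommGroup G] (H : AddSubgroup G) {m n : ℕ} (hmn : m ∣ n)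
    {a : G} (ha : memHn H n a) : memHn H m a := by
  obtain ⟨h, hH, x, hx⟩ := ha
  obtain ⟨c, rfl⟩ := hmn
  exact ⟨h, hH, c • x, by rw [hx, mul_smul]⟩

lemma memHn_mul {G : Type*} [AddCommGroup G] (H : AddSubgroup G) {m k : ℕ}
    (hco : Nat.Coprime m k) {a : G} (hm : memHn H m a) (hk : memHn H k a) :
    memHn H (m * k) a := by
  obtain ⟨h1, hH1, x, hx⟩ := hm
  obtain ⟨h2, hH2, y, hy⟩ := hk
  obtain ⟨u, v, huv⟩ := (Nat.isCoprime_iff_coprime.mpr hco)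
  refine ⟨(u * m) • h2 + (v * k) • h1, add_mem (zsmul_mem hH2 _) (zsmul_mem hH1 _),
    u • y + v • x, ?_⟩
  have hx' : a = h1 + (m : ℤ) • x := by rw [hx, natCast_zsmul]
  have hy' : a = h2 + (k : ℤ) • y := by rw [hy, natCast_zsmul]
  have key : a = ((u * m) • h2 + (v * k) • h1) + ((m : ℤ) * k) • (u • y + v • x) := by
    have ha : (u * (m:ℤ) + v * k) • a = a := by rw [huv, one_smul]
    linear_combination (norm := module) (u * (m:ℤ)) • hy' + (v * (k:ℤ)) • hx' - ha
  rw [key]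
  congr 1
  rw [← natCast_zsmul, Nat.cast_mul]

lemma memHn_of_primePows {G : Type*} [AddCommGroup G] (H : AddSubgroup G) :
    ∀ n : ℕ, 0 < n → ∀ a : G,
      (∀ p : ℕ, p.Prime → p ∣ n → memHn H (p ^ n.factorization p) a) → memHn H n a := by
  intro n
  induction n using Nat.strong_induction_on with
  | _ n ih =>
    intro hn a hall
    rcases eq_or_lt_of_le (show 1 ≤ n by omega) with h1 | h2
    · exact ⟨0, zero_mem _, a, by simp [← h1]⟩
    · have hne1 : n ≠ 1 := by omega
      set p := n.minFac with hp
      have hpp : p.Prime := Nat.minFac_prime hne1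
      have hpd : p ∣ n := Nat.minFac_dvd n
      set k := n.factorization p with hk
      have hpk : p ^ k ∣ n := Nat.ordProj_dvd n p
      set m := n / p ^ k with hm
      have hnm : n = p ^ k * m := (Nat.div_mul_cancel hpk).symm.trans (mul_comm _ _)
      have hmpos : 0 < m := Nat.ordCompl_pos p (by omega)
      have hcop : Nat.Coprime p m := Nat.coprime_ordCompl hpp (by omega)
      have hkpos : 0 < k := hpp.factorization_pos_of_dvd (by omega) hpd
      have hpk1 : 1 < p ^ k := one_lt_pow₀ hpp.one_lt hkpos.ne'
      have hmlt : m < n := Nat.div_lt_self (by omega) hpk1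
      have hmm : memHn H m a := by
        refine ih m hmlt hmpos a ?_
        intro q hq hqm
        have hqn : q ∣ n := hqm.trans (Nat.div_dvd_of_dvd hpk)
        have hqp : q ≠ p := by
          rintro rfl
          exact hpp.one_lt.ne' (Nat.eq_one_of_dvd_coprimes hcop dvd_rfl hqm)
        have : m.factorization q = n.factorization q := by
          have h0 : p ^ k ≠ 0 := by positivity
          rw [hnm, Nat.factorization_mul h0 hmpos.ne']
          simp [hpp.factorization_pow, Finsupp.single_apply, hqp.symm]
        rw [this]
        exact hall q hq hqn
      have hpkm : memHn H (p ^ k) a := hall p hpp hpd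
      rw [hnm]
      exact memHn_mul H (hcop.pow_left k) hpkm hmm

/-- `𝔰ₙ(a) = max_{p prime, p ∣ n} 𝔰_{p^{v_p(n)}}(a)`. -/
theorem stmt13 {G : Type*} [AddCommGroup G] [LinearOrder G] [IsOrderedAddMonoid G] (n : ℕ) (hn : 2 ≤ n) (a : G)
    (u : WithBot (ConvexSubgroup G)) (hu : IsS n a u)
    (f : ℕ → WithBot (ConvexSubgroup G))
    (hf : ∀ p : ℕ, p.Prime → p ∣ n → IsS (p ^ (n.factorization p)) a (f p)) :
    (∀ p : ℕ, p.Prime → p ∣ n → f p ≤ u) ∧ (∃ p : ℕ, p.Prime ∧ p ∣ n ∧ f p = u) := by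
  rcases hu with ⟨⟨x, hx⟩, rfl⟩ | ⟨hnx, H, rfl, hHmem, hHmax⟩
  · -- a ∈ nG, u = ⊥; every f p = ⊥
    have hbot : ∀ p : ℕ, p.Prime → p ∣ n → f p = ⊥ := by
      intro p hp hpd
      rcases hf p hp hpd with ⟨_, h⟩ | ⟨hne, _⟩
      · exact h
      · exfalso
        apply hne
        obtain ⟨c, hc⟩ := Nat.ordProj_dvd n p
        exact ⟨c • x, hx.trans (by rw [← mul_smul, ← hc])⟩
    refine ⟨fun p hp hpd => (hbot p hp hpd).le, n.minFac, Nat.minFac_prime (by omega),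
      Nat.minFac_dvd n, hbot _ (Nat.minFac_prime (by omega)) (Nat.minFac_dvd n)⟩
  · have key : ∀ q : ℕ, q.Prime → q ∣ n →
        ∀ Hq : ConvexSubgroup G, f q = ↑Hq → ¬ memHn Hq.1 (q ^ n.factorization q) a →
          Hq ≤ H := by
      intro q hq hqd Hq hfq hqmem
      refine hHmax Hq fun hmem => hqmem ?_
      exact memHn_of_dvd Hq.1 (Nat.ordProj_dvd n q) hmem
    constructor
    · intro q hq hqd
      rcases hf q hq hqd with ⟨_, h⟩ | ⟨_, Hq, hfq, hqmem, _⟩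
      · exact h ▸ bot_le
      · rw [hfq]
        exact WithBot.coe_le_coe.mpr (key q hq hqd Hq hfq hqmem)
    · -- find p with ¬ memHn H (p ^ vp) a
      have : ¬ ∀ p : ℕ, p.Prime → p ∣ n → memHn H.1 (p ^ n.factorization p) a := by
        intro hall
        exact hHmem (memHn_of_primePows H.1 n (by omega) a hall)
      push_neg at this
      obtain ⟨p, hp, hpd, hpmem⟩ := this
      refine ⟨p, hp, hpd, ?_⟩
      rcases hf p hp hpd with ⟨⟨y, hy⟩, _⟩ | ⟨_, Hp, hfp, hpm, hpmax⟩
      · exact absurd ⟨0, zero_mem _, y, by rw [hy, zero_add]⟩ hpmem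
      · rw [hfp]
        exact congrArg _ (le_antisymm (key p hp hpd Hp hfp hpm) (hpmax H hpmem))
end

section
/- Let G be a linearly ordered abelian group, n ≥ 2, and H a convex subgroup in the image of 𝔰ₙ with H ≠ ∅. Define G_{≤H} = {a ∈ G : 𝔰ₙ(a) ≤ H} and G_{<H} = {a ∈ G : 𝔰ₙ(a) < H}. Then G_{<H} = H + nG. -/
lemma abs_mem_iff' {G : Type*} [AddCommGroup G] [LinearOrder G] [IsOrderedAddMonoid G] (K : AddSubgroup G) (x : G) :
    |x| ∈ K ↔ x ∈ K := by
  rcases abs_choice x with h | h <;> rw [h]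
  simp [AddSubgroup.neg_mem_iff]

lemma convex_comparable {G : Type*} [AddCommGroup G] [LinearOrder G] [IsOrderedAddMonoid G] {K₁ K₂ : AddSubgroup G}
    (h₁ : IsConvexSubgroup K₁) (h₂ : IsConvexSubgroup K₂) : K₁ ≤ K₂ ∨ K₂ ≤ K₁ := by
  by_contra hc
  push_neg at hc
  obtain ⟨hc1, hc2⟩ := hc
  obtain ⟨x, hx1, hx2⟩ := SetLike.not_le_iff_exists.mp hc1
  obtain ⟨y, hy2, hy1⟩ := SetLike.not_le_iff_exists.mp hc2
  rcases le_total |x| |y| with h | h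
  · exact hx2 ((abs_mem_iff' K₂ x).mp (h₂ (abs_nonneg x) h ((abs_mem_iff' K₂ y).mpr hy2)))
  · exact hy1 ((abs_mem_iff' K₁ y).mp (h₁ (abs_nonneg y) h ((abs_mem_iff' K₁ x).mpr hx1)))

theorem stmt14 {G : Type*} [AddCommGroup G] [LinearOrder G] [IsOrderedAddMonoid G] (n : ℕ) (hn : 2 ≤ n)
    (s : G → WithBot (ConvexSubgroup G)) (hs : ∀ a : G, IsS n a (s a))
    (H : ConvexSubgroup G) (hH : ∃ a : G, s a = ↑H) :
    {a : G | s a < ↑H} = {a : G | memHn H.1 n a} := by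
  ext a
  simp only [Set.mem_setOf_eq]
  constructor
  · intro hlt
    rcases hs a with ⟨⟨x, hx⟩, hbot⟩ | ⟨hnx, H'', heq, hmem, hmax⟩
    · exact ⟨0, zero_mem _, x, by simp [hx]⟩
    · rw [heq] at hlt
      have hlt' : H'' < H := WithBot.coe_lt_coe.mp hlt
      by_contra hma
      exact hlt'.not_ge (hmax H hma)
  · rintro ⟨h, hh, x, hax⟩
    rcases hs a with ⟨_, hbot⟩ | ⟨hnx, H'', heq, hmem, hmax⟩
    · rw [hbot]; exact WithBot.bot_lt_coe H
    · rw [heq]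
      refine WithBot.coe_lt_coe.mpr ?_
      have hne : ¬ H ≤ H'' := fun hle => hmem ⟨h, hle hh, x, hax⟩
      have hle : H''.1 ≤ H.1 := (convex_comparable H''.2 H.2).resolve_right hne
      exact lt_of_le_of_ne hle (fun he => hne he.ge)
end

section
/- Let G be a linearly ordered abelian group, n ≥ 2, and H a nonempty element of 𝒮ₙ = image of 𝔰ₙ. Define H^{[n]} = ⋂ over convex subgroups H' with H' ⊋ H of (H' + nG). Then {a ∈ G : 𝔰ₙ(a) ≤ H} = H^{[n]}. -/
lemma convex_total {G : Type*} [AddCommGroup G] [LinearOrder G] [IsOrderedAddMonoid G] (A B : ConvexSubgroup G) :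
    A ≤ B ∨ B ≤ A := by
  by_cases hAB : A ≤ B
  · exact Or.inl hAB
  · right
    rw [← Subtype.coe_le_coe, SetLike.not_le_iff_exists] at hAB
    obtain ⟨x, hxA, hxB⟩ := hAB
    intro y hyB
    have hxA' : |x| ∈ A.1 := abs_mem_iff.2 hxA
    have hle : |y| ≤ |x| := by
      by_contra hlt
      push_neg at hlt
      exact hxB (abs_mem_iff.1 (B.2 (abs_nonneg x) hlt.le (abs_mem_iff.2 hyB)))
    exact abs_mem_iff.1 (A.2 (abs_nonneg y) hle hxA')

/-- `{a : 𝔰ₙ(a) ≤ H} = H^{[n]}`, where `H^{[n]}` is the intersection of `H' + nG` over the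
convex subgroups `H'` strictly containing `H`. -/
theorem stmt15 {G : Type*} [AddCommGroup G] [LinearOrder G] [IsOrderedAddMonoid G] (n : ℕ) (hn : 2 ≤ n)
    (s : G → WithBot (ConvexSubgroup G)) (hs : ∀ a : G, IsS n a (s a))
    (H : ConvexSubgroup G) (hH : ∃ a : G, s a = ↑H) :
    {a : G | s a ≤ ↑H} = {a : G | ∀ H' : ConvexSubgroup G, H < H' → memHn H'.1 n a} := by
  ext a
  simp only [Set.mem_setOf_eq]
  rcases hs a with ⟨⟨x, hx⟩, hbot⟩ | ⟨hna, K, hK, hKmem, hKmax⟩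
  · rw [hbot]
    exact ⟨fun _ H' _ => ⟨0, H'.1.zero_mem, x, by rw [hx, zero_add]⟩,
      fun _ => bot_le⟩
  · rw [hK, WithBot.coe_le_coe]
    constructor
    · intro hKH H' hH'
      by_contra hmem
      exact absurd (le_trans (hKmax H' hmem) hKH) (not_le_of_gt hH')
    · intro h
      rcases convex_total K H with h1 | h1
      · exact h1
      · by_contra hKH
        exact hKmem (h K (lt_of_le_of_ne h1 (fun e => hKH (le_of_eq e.symm))))
end

section
/- Let G be a linearly ordered abelian group, n ≥ 2, and H a convex subgroup of G. Define H^{[m]} = ⋂_{H' ⊋ H convex} (H' + mG). Then H^{[m]} = ⋂_{H' ∈ 𝒮ₘ, H' ⊋ H} (H' + mG), where 𝒮ₘ is the image of 𝔰ₘ on G \ mG. -/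
/-- `H^{[m]} = ⋂_{H' ∈ 𝒮ₘ, H' ⊋ H} (H' + mG)`. -/
theorem stmt16 {G : Type*} [AddCommGroup G] [LinearOrder G] [IsOrderedAddMonoid G] (m : ℕ) (hm : 2 ≤ m)
    (s : G → WithBot (ConvexSubgroup G)) (hs : ∀ a : G, IsS m a (s a))
    (H : ConvexSubgroup G) :
    {a : G | ∀ H' : ConvexSubgroup G, H < H' → memHn H'.1 m a}
      = {a : G | ∀ H' : ConvexSubgroup G, H < H' → (∃ b : G, s b = ↑H') → memHn H'.1 m a} := by
  ext a
  simp only [Set.mem_setOf_eq]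
  constructor
  · intro h H' hH' _
    exact h H' hH'
  · intro h H' hH'
    by_contra hmem
    have hnot : ¬ ∃ x : G, a = m • x := by
      rintro ⟨x, rfl⟩
      exact hmem ⟨0, H'.1.zero_mem, x, by simp⟩
    rcases hs a with ⟨hx, _⟩ | ⟨_, K, hK, hKa, hKmax⟩
    · exact hnot hx
    · exact hKa (h K (lt_of_lt_of_le hH' (hKmax H' hmem)) ⟨a, hK⟩)
end

section
/- Let G be a linearly ordered abelian group, n ≥ 2, and suppose 𝒮ₙ \ {∅} is finite, listed as H₁ ⊊ H₂ ⊊ … ⊊ Hₘ. Then the cardinality of G/nG equals the product over i = 1,…,m of the cardinalities of the ribs R_{Hᵢ} = {a : 𝔰ₙ(a) ≤ Hᵢ} / {a : 𝔰ₙ(a) < Hᵢ}. -/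
/-- The subgroup `nG = {n • a : a ∈ G}`. -/
def mulSub (G : Type*) [AddCommGroup G] (n : ℕ) : AddSubgroup G where
  carrier := {x : G | ∃ a : G, x = n • a}
  zero_mem' := ⟨0, by simp⟩
  add_mem' := by rintro x y ⟨a, rfl⟩ ⟨b, rfl⟩; exact ⟨a + b, by rw [smul_add]⟩
  neg_mem' := by rintro x ⟨a, rfl⟩; exact ⟨-a, by rw [smul_neg]⟩

section AuxLemmas
variable {G : Type*} [AddCommGroup G] [LinearOrder G] [IsOrderedAddMonoid G]

lemma abs_mem_iff'_s19 {H : AddSubgroup G} {x : G} : |x| ∈ H ↔ x ∈ H := by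
  rcases abs_choice x with h | h
  · rw [h]
  · rw [h]; exact ⟨fun hx => by simpa using H.neg_mem hx, H.neg_mem⟩

lemma convex_total_s19 (K H : ConvexSubgroup G) : K ≤ H ∨ H ≤ K := by
  by_cases h : K ≤ H
  · exact Or.inl h
  · right
    obtain ⟨x, hxK, hxH⟩ := SetLike.not_le_iff_exists.mp (show ¬ K.1 ≤ H.1 from h)
    intro y hy
    have hxK' : |x| ∈ K.1 := abs_mem_iff'_s19.mpr hxK
    have hxH' : |x| ∉ H.1 := fun hc => hxH (abs_mem_iff'_s19.mp hc)
    have hyH : |y| ∈ H.1 := abs_mem_iff'_s19.mpr hy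
    have hle : |y| ≤ |x| := by
      by_contra hlt
      exact hxH' (H.2 (abs_nonneg x) (le_of_not_ge hlt) hyH)
    exact abs_mem_iff'_s19.mp (K.2 (abs_nonneg y) hle hxK')

lemma memHn_mono {K K' : AddSubgroup G} (h : K ≤ K') {n : ℕ} {a : G} :
    memHn K n a → memHn K' n a := fun ⟨b, hb, x, hx⟩ => ⟨b, h hb, x, hx⟩

lemma memHn_iff_lt {n : ℕ} {a : G} {sa : WithBot (ConvexSubgroup G)} (hsa : IsS n a sa)
    (K : ConvexSubgroup G) : memHn K.1 n a ↔ sa < ↑K := by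
  rcases hsa with ⟨⟨x, rfl⟩, hb⟩ | ⟨hnx, H₀, hseq, hnm, hmax⟩
  · subst hb
    simp only [WithBot.bot_lt_coe, iff_true]
    exact ⟨0, K.1.zero_mem, x, by simp⟩
  · subst hseq
    rw [WithBot.coe_lt_coe]
    constructor
    · intro hm
      rcases convex_total_s19 K H₀ with hle | hle
      · exact absurd (memHn_mono hle hm) hnm
      · exact lt_of_le_of_ne hle (fun hc => hnm (hc ▸ hm))
    · intro hlt
      by_contra hm
      exact hlt.not_ge (hmax K hm)

lemma s_eq_bot_iff {n : ℕ} {a : G} {sa : WithBot (ConvexSubgroup G)} (hsa : IsS n a sa) :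
    sa = ⊥ ↔ ∃ x : G, a = n • x := by
  rcases hsa with ⟨hx, hb⟩ | ⟨hnx, H₀, hseq, _, _⟩
  · simp [hb, hx]
  · simp [hseq, hnx]

end AuxLemmas

/-- The set `H + nG` as a subgroup. -/
def hnSub {G : Type*} [AddCommGroup G] (K : AddSubgroup G) (n : ℕ) : AddSubgroup G where
  carrier := {a | memHn K n a}
  zero_mem' := ⟨0, K.zero_mem, 0, by simp⟩
  add_mem' := by
    rintro a b ⟨h, hh, x, rfl⟩ ⟨h', hh', y, rfl⟩
    exact ⟨h + h', K.add_mem hh hh', x + y, by rw [smul_add]; abel⟩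
  neg_mem' := by
    rintro a ⟨h, hh, x, rfl⟩
    exact ⟨-h, K.neg_mem hh, -x, by rw [smul_neg]; abel⟩

lemma mem_hnSub {G : Type*} [AddCommGroup G] {K : AddSubgroup G} {n : ℕ} {a : G} :
    a ∈ hnSub K n ↔ memHn K n a := Iff.rfl

/-- If `𝒮ₙ \ {∅}` is finite, listed as `H 0 ⊊ H 1 ⊊ ⋯ ⊊ H (m-1)`, then
`|G/nG| = ∏ᵢ |R_{Hᵢ}|`, where the rib `R_{Hᵢ}` is the quotient of
`{a : 𝔰ₙ(a) ≤ Hᵢ}` by the relation `a ~ b ↔ 𝔰ₙ(a - b) < Hᵢ` (i.e. by the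
subgroup `{a : 𝔰ₙ(a) < Hᵢ}`). -/
theorem stmt19 {G : Type*} [AddCommGroup G] [LinearOrder G] [IsOrderedAddMonoid G] (n : ℕ) (hn : 2 ≤ n)
    (s : G → WithBot (ConvexSubgroup G)) (hs : ∀ a : G, IsS n a (s a))
    (m : ℕ) (H : Fin m → ConvexSubgroup G) (hmono : StrictMono H)
    (himg : ∀ i : Fin m, ∃ a : G, s a = ↑(H i))
    (hcover : ∀ a : G, s a ≠ ⊥ → ∃ i : Fin m, s a = ↑(H i)) :
    Nat.card (G ⧸ mulSub G n) =
      ∏ i : Fin m,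
        Nat.card (Quot (fun a b : {x : G // s x ≤ ↑(H i)} => s (a.1 - b.1) < ↑(H i))) := by
  classical
  rcases Nat.eq_zero_or_pos m with hm0 | hm0
  · subst hm0
    have htop : mulSub G n = ⊤ := by
      ext a
      simp only [AddSubgroup.mem_top, iff_true]
      have hb : s a = ⊥ := by
        by_contra hb
        obtain ⟨i, _⟩ := hcover a hb
        exact i.elim0
      exact (s_eq_bot_iff (hs a)).mp hb
    rw [htop]
    show (⊤ : AddSubgroup G).index = _
    rw [AddSubgroup.index_top]
    simp
  -- main case : m > 0
  set C : ℕ → AddSubgroup G := fun j => if h : j < m then hnSub (H ⟨j, h⟩).1 n else ⊤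
    with hCdef
  have hCmem : ∀ {j : ℕ} (hj : j < m) (a : G), a ∈ C j ↔ s a < ↑(H ⟨j, hj⟩) := by
    intro j hj a
    simp only [hCdef, dif_pos hj]
    exact memHn_iff_lt (hs a) _
  have hCtop : ∀ {j : ℕ}, m ≤ j → C j = ⊤ := by
    intro j hj
    simp [hCdef, Nat.not_lt.mpr hj]
  have hmem_succ : ∀ (i : Fin m) (a : G), a ∈ C (i.1 + 1) ↔ s a ≤ ↑(H i) := by
    intro i a
    by_cases h : i.1 + 1 < m
    · rw [hCmem h a]
      constructor
      · intro hlt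
        rcases eq_or_ne (s a) ⊥ with hb | hb
        · simp [hb]
        · obtain ⟨j, hj⟩ := hcover a hb
          rw [hj] at hlt ⊢
          rw [WithBot.coe_lt_coe, hmono.lt_iff_lt] at hlt
          rw [WithBot.coe_le_coe]
          have hj' : j.1 < i.1 + 1 := hlt
          exact hmono.monotone (Fin.le_def.mpr (by omega))
      · intro hle
        refine lt_of_le_of_lt hle ?_
        rw [WithBot.coe_lt_coe]
        exact hmono (Fin.lt_def.mpr (Nat.lt_succ_self i.1))
    · rw [hCtop (le_of_not_gt h)]
      simp only [AddSubgroup.mem_top, true_iff]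
      rcases eq_or_ne (s a) ⊥ with hb | hb
      · simp [hb]
      · obtain ⟨j, hj⟩ := hcover a hb
        rw [hj, WithBot.coe_le_coe]
        have hj2 := j.2
        exact hmono.monotone (Fin.le_def.mpr (by omega))
  have hC0 : C 0 = mulSub G n := by
    ext a
    rw [hCmem hm0 a]
    constructor
    · intro hlt
      have hb : s a = ⊥ := by
        by_contra hb
        obtain ⟨j, hj⟩ := hcover a hb
        rw [hj, WithBot.coe_lt_coe] at hlt
        have : (⟨0, hm0⟩ : Fin m) ≤ j := Fin.le_def.mpr (Nat.zero_le _)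
        exact absurd (hmono.monotone this) hlt.not_ge
      exact (s_eq_bot_iff (hs a)).mp hb
    · intro ha
      obtain ⟨x, hx⟩ := ha
      have hb : s a = ⊥ := (s_eq_bot_iff (hs a)).mpr ⟨x, hx⟩
      rw [hb]
      exact WithBot.bot_lt_coe _
  have hchain : ∀ j : ℕ, C j ≤ C (j + 1) := by
    intro j
    by_cases h : j + 1 < m
    · have hj : j < m := by omega
      simp only [hCdef, dif_pos h, dif_pos hj]
      intro a ha
      have hle : H ⟨j, hj⟩ ≤ H ⟨j + 1, h⟩ := hmono.monotone (Fin.le_def.mpr (Nat.le_succ j))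
      exact memHn_mono hle ha
    · rw [hCtop (le_of_not_gt h)]
      exact le_top
  have hprod : ∀ d k, k + d = m →
      (C k).index = ∏ i ∈ Finset.Ico k m, (C i).relIndex (C (i + 1)) := by
    intro d
    induction d with
    | zero =>
      intro k hk
      have : k = m := by omega
      subst this
      rw [Finset.Ico_self, Finset.prod_empty, hCtop le_rfl, AddSubgroup.index_top]
    | succ d ih =>
      intro k hk
      have hkm : k < m := by omega
      rw [Finset.prod_eq_prod_Ico_succ_bot hkm, ← ih (k + 1) (by omega)]
      exact (AddSubgroup.relIndex_mul_index (hchain k)).symm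
  have hmain : Nat.card (G ⧸ mulSub G n) = (mulSub G n).index := rfl
  rw [hmain, ← hC0, hprod m 0 (by omega), ← Finset.range_eq_Ico,
    Finset.prod_range (fun j => (C j).relIndex (C (j + 1)))]
  refine Finset.prod_congr rfl fun i _ => ?_
  -- per-index equality
  have e1 : ∀ x : G, s x ≤ ↑(H i) ↔ x ∈ C (i.1 + 1) := fun x => (hmem_succ i x).symm
  have e0 : ∀ x : G, x ∈ C i.1 ↔ s x < ↑(H i) := fun x => hCmem i.2 x
  have hrel : ∀ a b : G, s (a - b) < ↑(H i) ↔ -a + b ∈ C i.1 := by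
    intro a b
    rw [← e0]
    constructor
    · intro h
      have := (C i.1).neg_mem h
      rwa [show -(a - b) = -a + b by abel] at this
    · intro h
      have := (C i.1).neg_mem h
      rwa [show -(-a + b) = a - b by abel] at this
  let K' := (C i.1).addSubgroupOf (C (i.1 + 1))
  let g : Quot (fun a b : {x : G // s x ≤ ↑(H i)} => s (a.1 - b.1) < ↑(H i)) →
      (↥(C (i.1 + 1)) ⧸ K') :=
    Quot.lift (fun a => QuotientAddGroup.mk ⟨a.1, (e1 a.1).mp a.2⟩)
      (by
        intro a b hab
        apply Quotient.sound'
        rw [QuotientAddGroup.leftRel_apply, AddSubgroup.mem_addSubgroupOf]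
        exact (hrel a.1 b.1).mp hab)
  have hg : Function.Bijective g := by
    constructor
    · intro q1 q2
      induction q1 using Quot.ind with
      | mk a =>
        induction q2 using Quot.ind with
        | mk b =>
          intro hab
          have h1 : (QuotientAddGroup.mk (⟨a.1, (e1 a.1).mp a.2⟩ : C (i.1 + 1)) :
              ↥(C (i.1 + 1)) ⧸ K') = QuotientAddGroup.mk ⟨b.1, (e1 b.1).mp b.2⟩ := hab
          rw [QuotientAddGroup.eq, AddSubgroup.mem_addSubgroupOf] at h1
          exact Quot.sound ((hrel a.1 b.1).mpr h1)
    · intro q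
      induction q using Quotient.inductionOn' with
      | h b => exact ⟨Quot.mk _ ⟨b.1, (e1 b.1).mpr b.2⟩, rfl⟩
  exact (Nat.card_congr (Equiv.ofBijective g hg)).symm
end
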